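/- If I is a binary matrix and R, C are permutation matrices satisfying R·I = I·Cᵀ, then the block matrices H_X = [Iᵀ | 1+C] and H_Z = [1+R | I] satisfy H_X · H_Zᵀ = 0 over GF(2). -/

import Mathlib

open Matrix

/-- A GF(2) matrix is a permutation matrix if it arises from some permutation. -/
def IsPermMatrix {k : ℕ} (M : Matrix (Fin k) (Fin k) (ZMod 2)) : Prop :=
  ∃ σ : Equiv.Perm (Fin k), M = σ.permMatrix (ZMod 2)

/-- If `R·I = I·Cᵀ` for permutation matrices `R`, `C`, then
`H_X = [Iᵀ | 1+C]` and `H_Z = [1+R | I]` satisfy `H_X · H_Zᵀ = 0` over GF(2). -/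
theorem balanced_product_commute
    {m n : ℕ} (I : Matrix (Fin m) (Fin n) (ZMod 2))
    (R : Matrix (Fin m) (Fin m) (ZMod 2)) (C : Matrix (Fin n) (Fin n) (ZMod 2))
    (hR : IsPermMatrix R) (hC : IsPermMatrix C)
    (hsym : R * I = I * Cᵀ) :
    (fromCols Iᵀ (1 + C)) * (fromCols (1 + R) I)ᵀ = 0 := by
  have h : Iᵀ * Rᵀ = C * Iᵀ := by
    calc Iᵀ * Rᵀ = (R * I)ᵀ := (transpose_mul R I).symm
    _ = (I * Cᵀ)ᵀ := by rw [hsym]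
    _ = C * Iᵀ := by rw [transpose_mul, transpose_transpose]
  rw [transpose_fromCols, fromCols_mul_fromRows]
  have h2 : ∀ (M : Matrix (Fin n) (Fin m) (ZMod 2)), M + M = 0 := by
    intro M; ext i j; simp [CharTwo.add_self_eq_zero]
  rw [transpose_add, transpose_one, Matrix.mul_add, Matrix.mul_one, Matrix.add_mul, Matrix.one_mul]
  rw [h, add_add_add_comm, h2, h2, add_zero]
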